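/- Positivity of ħ: for every s > 0 and every y ∈ (0,1), s^y · ( Γ(1−y) + y·∫_s^∞ t^{−1−y} e^{−t} dt ) > 1; equivalently, ħ(s, y) > 0. -/

import Mathlib

open MeasureTheory Set Filter Topology

private lemma integrableOn_rpow_mul_exp_Ioi {s p : ℝ} (hs : 0 < s) (hp : p ≤ 0) :
    IntegrableOn (fun t : ℝ => t ^ p * Real.exp (-t)) (Ioi s) := by
  have hmeas : AEStronglyMeasurable (fun t : ℝ => t ^ p * Real.exp (-t))
      (volume.restrict (Ioi s)) := by
    refine ContinuousOn.aestronglyMeasurable (fun t ht => ?_) measurableSet_Ioi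
    exact ((Real.continuousAt_rpow_const t p (Or.inl (hs.trans ht).ne')).continuousWithinAt).mul
      (Real.continuous_exp.comp continuous_neg).continuousWithinAt
  have hbound : IntegrableOn (fun t : ℝ => s ^ p * Real.exp (-1 * t)) (Ioi s) :=
    (exp_neg_integrableOn_Ioi s one_pos).const_mul _
  refine Integrable.mono' hbound hmeas ?_
  filter_upwards [ae_restrict_mem measurableSet_Ioi] with t ht
  have h1 : t ^ p ≤ s ^ p := Real.rpow_le_rpow_of_nonpos hs (le_of_lt ht) hp
  have h2 : (0:ℝ) < t ^ p := Real.rpow_pos_of_pos (hs.trans ht) p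
  rw [Real.norm_eq_abs, abs_of_nonneg (by positivity)]
  simp only [neg_one_mul]
  exact mul_le_mul_of_nonneg_right h1 (Real.exp_pos _).le

/-- Positivity of `ħ`: for every `s > 0` and every `y ∈ (0,1)`,
`s^y·(Γ(1−y) + y·∫_s^∞ t^{−1−y} e^{−t} dt) > 1`, i.e. `ħ(s, y) > 0`. -/
theorem hbar_pos (s y : ℝ) (hs : 0 < s) (hy : y ∈ Set.Ioo (0 : ℝ) 1) :
    1 < s ^ y * (Real.Gamma (1 - y) + y * ∫ t in Ioi s, t ^ (-1 - y) * Real.exp (-t)) := by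
  obtain ⟨hy0, hy1⟩ := hy
  -- integrability facts
  have I1 : IntegrableOn (fun t : ℝ => t ^ (-1 - y) * Real.exp (-t)) (Ioi s) :=
    integrableOn_rpow_mul_exp_Ioi hs (by linarith)
  have I2 : IntegrableOn (fun t : ℝ => t ^ (-y) * Real.exp (-t)) (Ioi s) :=
    integrableOn_rpow_mul_exp_Ioi hs (by linarith)
  have I3 : IntegrableOn (fun t : ℝ => t ^ (-y) * Real.exp (-t)) (Ioc 0 s) := by
    have := (Real.GammaIntegral_convergent (s := 1 - y) (by linarith)).mono_set
      (Ioc_subset_Ioi_self : Ioc (0:ℝ) s ⊆ Ioi 0)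
    refine this.congr_fun (fun t ht => ?_) measurableSet_Ioc
    rw [mul_comm]
    norm_num
  have Iexp : IntegrableOn (fun t : ℝ => Real.exp (-t)) (Ioc 0 s) := by
    have : IntegrableOn (fun t : ℝ => Real.exp (-1 * t)) (Ioc 0 s) :=
      (exp_neg_integrableOn_Ioi 0 one_pos).mono_set Ioc_subset_Ioi_self
    simpa using this
  -- integration by parts on (s, ∞)
  have key : (∫ t in Ioi s, (y * (t ^ (-1 - y) * Real.exp (-t)) + t ^ (-y) * Real.exp (-t)))
      = s ^ (-y) * Real.exp (-s) := by
    have hderiv : ∀ t ∈ Ioi s, HasDerivAt (fun t : ℝ => -(t ^ (-y) * Real.exp (-t)))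
        (y * (t ^ (-1 - y) * Real.exp (-t)) + t ^ (-y) * Real.exp (-t)) t := by
      intro t ht
      have htpos : (0:ℝ) < t := hs.trans ht
      have h1 : HasDerivAt (fun t : ℝ => t ^ (-y)) (-y * t ^ (-y - 1)) t :=
        Real.hasDerivAt_rpow_const (Or.inl htpos.ne')
      have h2 : HasDerivAt (fun t : ℝ => Real.exp (-t)) (-Real.exp (-t)) t := by
        simpa using (hasDerivAt_neg t).exp
      have := (h1.mul h2).neg
      refine this.congr_deriv ?_
      rw [show (-y - 1 : ℝ) = -1 - y by ring]
      ring
    have htend : Tendsto (fun t : ℝ => -(t ^ (-y) * Real.exp (-t))) atTop (𝓝 0) := by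
      have h1 : Tendsto (fun t : ℝ => t ^ (-y)) atTop (𝓝 0) := tendsto_rpow_neg_atTop hy0
      have h2 : Tendsto (fun t : ℝ => Real.exp (-t)) atTop (𝓝 0) :=
        Real.tendsto_exp_atBot.comp tendsto_neg_atTop_atBot
      simpa using (h1.mul h2).neg
    have hint : IntegrableOn
        (fun t : ℝ => y * (t ^ (-1 - y) * Real.exp (-t)) + t ^ (-y) * Real.exp (-t)) (Ioi s) :=
      (I1.const_mul y).add I2
    have := integral_Ioi_of_hasDerivAt_of_tendsto
      (f := fun t : ℝ => -(t ^ (-y) * Real.exp (-t)))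
      (by
        refine ContinuousWithinAt.neg (ContinuousWithinAt.mul ?_ ?_)
        · exact (Real.continuousAt_rpow_const s (-y) (Or.inl hs.ne')).continuousWithinAt
        · exact (Real.continuous_exp.comp continuous_neg).continuousWithinAt)
      hderiv hint htend
    rw [this]; ring
  -- split the Gamma integral
  have hGamma : Real.Gamma (1 - y)
      = (∫ t in Ioc 0 s, t ^ (-y) * Real.exp (-t)) + ∫ t in Ioi s, t ^ (-y) * Real.exp (-t) := by
    rw [Real.Gamma_eq_integral (by linarith : (0:ℝ) < 1 - y)]
    have hsplit : (Ioi (0:ℝ)) = Ioc 0 s ∪ Ioi s := (Ioc_union_Ioi_eq_Ioi hs.le).symm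
    rw [hsplit, setIntegral_union (Ioc_disjoint_Ioi le_rfl) measurableSet_Ioi]
    · congr 1
      · refine setIntegral_congr_fun measurableSet_Ioc (fun t ht => ?_)
        rw [mul_comm]; norm_num
      · refine setIntegral_congr_fun measurableSet_Ioi (fun t ht => ?_)
        rw [mul_comm]; norm_num
    · refine I3.congr_fun (fun t ht => ?_) measurableSet_Ioc
      rw [mul_comm]; norm_num
    · refine I2.congr_fun (fun t ht => ?_) measurableSet_Ioi
      rw [mul_comm]; norm_num
  -- combine
  have hsum : y * (∫ t in Ioi s, t ^ (-1 - y) * Real.exp (-t))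
      + (∫ t in Ioi s, t ^ (-y) * Real.exp (-t)) = s ^ (-y) * Real.exp (-s) := by
    rw [← key, integral_add (I1.const_mul y) I2, integral_const_mul]
  have hmain : s ^ y * (Real.Gamma (1 - y) + y * ∫ t in Ioi s, t ^ (-1 - y) * Real.exp (-t))
      = s ^ y * (∫ t in Ioc 0 s, t ^ (-y) * Real.exp (-t)) + Real.exp (-s) := by
    have hpow : s ^ y * s ^ (-y) = 1 := by
      rw [← Real.rpow_add hs]; norm_num
    rw [hGamma]
    linear_combination s ^ y * hsum + Real.exp (-s) * hpow
  rw [hmain]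
  -- the strict inequality
  have hIocInt : ∫ t in Ioc 0 s, Real.exp (-t) = 1 - Real.exp (-s) := by
    rw [← intervalIntegral.integral_of_le hs.le,
      intervalIntegral.integral_comp_neg (f := Real.exp), integral_exp]
    simp
  have hpos : 0 < ∫ t in Ioc 0 s,
      (s ^ y * (t ^ (-y) * Real.exp (-t)) - Real.exp (-t)) := by
    rw [setIntegral_pos_iff_support_of_nonneg_ae]
    · have hsub : Ioo 0 s ⊆
          (Function.support fun t => s ^ y * (t ^ (-y) * Real.exp (-t)) - Real.exp (-t))
            ∩ Ioc 0 s := by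
        intro t ht'
        constructor
        · show s ^ y * (t ^ (-y) * Real.exp (-t)) - Real.exp (-t) ≠ 0
          have h1 : s ^ (-y) < t ^ (-y) :=
            Real.rpow_lt_rpow_of_neg ht'.1 ht'.2 (by linarith)
          have h2 : s ^ y * s ^ (-y) = 1 := by
            rw [← Real.rpow_add hs]; norm_num
          have h3 : (1:ℝ) < s ^ y * t ^ (-y) := by
            calc (1:ℝ) = s ^ y * s ^ (-y) := h2.symm
            _ < s ^ y * t ^ (-y) :=
              mul_lt_mul_of_pos_left h1 (Real.rpow_pos_of_pos hs y)
          have := Real.exp_pos (-t)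
          nlinarith
        · exact Ioo_subset_Ioc_self ht'
      calc (0:ENNReal) < volume (Ioo 0 s) := by
            rw [Real.volume_Ioo]; simpa using hs
        _ ≤ _ := measure_mono hsub
    · filter_upwards [ae_restrict_mem measurableSet_Ioc] with t ht
      simp only [Pi.zero_apply]
      have h1 : s ^ (-y) ≤ t ^ (-y) :=
        Real.rpow_le_rpow_of_nonpos ht.1 ht.2 (by linarith)
      have h2 : s ^ y * s ^ (-y) = 1 := by
        rw [← Real.rpow_add hs]; norm_num
      have h3 : (1:ℝ) ≤ s ^ y * t ^ (-y) := by
        calc (1:ℝ) = s ^ y * s ^ (-y) := h2.symm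
        _ ≤ s ^ y * t ^ (-y) :=
          mul_le_mul_of_nonneg_left h1 (Real.rpow_pos_of_pos hs y).le
      have := Real.exp_pos (-t)
      nlinarith
    · exact (I3.const_mul _).sub Iexp
  rw [integral_sub (I3.const_mul _) Iexp, integral_const_mul, hIocInt] at hpos
  linarith
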